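/- For all natural numbers k ≥ 1 and real numbers R > 0, x ≥ 0, the integral ∫_{-1}^{1} (1-s²)^{k-1} / (R² + x² + 2Rxs)^{(2k-1)/2} ds equals ((2k-2)/(2k-1)) · ((2k-4)/(2k-3)) ⋯ (4/3) · (1/R^{2k-1}), i.e. equals (√π · Γ(k)/Γ(k+1/2)) · R^{-(2k-1)}, provided x < R (so the integrand is well-defined). -/

import Mathlib

open Real intervalIntegral

noncomputable section ShellAux
open MeasureTheory

def shellC (k : ℕ) : ℝ := Real.sqrt π * Real.Gamma k / Real.Gamma (k + 1/2)

def shellI (j : ℕ) (e t : ℝ) : ℝ :=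
  ∫ s in (-1:ℝ)..1, (1 - s^2)^j * (1 + t^2 + 2*t*s) ^ e

lemma Gamma_three_half' : Real.Gamma (3/2 : ℝ) = Real.sqrt π / 2 := by
  rw [show (3/2:ℝ) = 1/2 + 1 by norm_num, Real.Gamma_add_one (by norm_num), Real.Gamma_one_half_eq]
  ring

lemma shellC_one : shellC 1 = 2 := by
  have hπ : (0:ℝ) < Real.sqrt π := Real.sqrt_pos.mpr Real.pi_pos
  simp only [shellC, Nat.cast_one, Real.Gamma_one]
  rw [show (1:ℝ) + 1/2 = 3/2 by norm_num, Gamma_three_half']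
  field_simp

lemma shellC_rec (j : ℕ) : (2*(j:ℝ)+3) * shellC (j+2) = 2*((j:ℝ)+1) * shellC (j+1) := by
  have h1 : Real.Gamma ((j:ℝ)+2) = ((j:ℝ)+1) * Real.Gamma ((j:ℝ)+1) := by
    rw [show ((j:ℝ)+2) = ((j:ℝ)+1) + 1 by ring, Real.Gamma_add_one (by positivity)]
  have h2 : Real.Gamma ((j:ℝ)+2+1/2) = ((j:ℝ)+3/2) * Real.Gamma ((j:ℝ)+1+1/2) := by
    rw [show ((j:ℝ)+2+1/2) = ((j:ℝ)+1+1/2) + 1 by ring, Real.Gamma_add_one (by positivity)]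
    ring
  have h3 : 0 < Real.Gamma ((j:ℝ)+1+1/2) := Real.Gamma_pos_of_pos (by positivity)
  simp only [shellC]
  push_cast
  rw [h1, h2]
  field_simp

lemma shell_pos {t : ℝ} (ht : |t| < 1) {s : ℝ} (hs : s ∈ Set.uIcc (-1:ℝ) 1) :
    0 < 1 + t^2 + 2*t*s := by
  rw [Set.uIcc_of_le (by norm_num)] at hs
  obtain ⟨hs1, hs2⟩ := hs
  obtain ⟨ht1, ht2⟩ := abs_lt.mp ht
  have h2A : 2*(1+t^2+2*t*s) = (1+t)^2*(1+s) + (1-t)^2*(1-s) := by ring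
  rcases lt_or_ge s 1 with h | h
  · nlinarith [sq_nonneg (1+t), sq_nonneg (1-t),
      mul_nonneg (sq_nonneg (1+t)) (by linarith : (0:ℝ) ≤ 1+s),
      mul_pos (by nlinarith : (0:ℝ) < (1-t)^2) (by linarith : (0:ℝ) < 1-s)]
  · have : s = 1 := le_antisymm hs2 h
    subst this
    nlinarith

lemma shell_intble {t : ℝ} (ht : |t| < 1) (e : ℝ) {p : ℝ → ℝ} (hp : Continuous p) :
    IntervalIntegrable (fun s => p s * (1 + t^2 + 2*t*s) ^ e) volume (-1:ℝ) 1 := by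
  apply ContinuousOn.intervalIntegrable
  apply hp.continuousOn.mul
  apply ContinuousOn.rpow_const (by fun_prop)
  intro s hs
  exact Or.inl (shell_pos ht hs).ne'

lemma shell_contOn {t : ℝ} (ht : |t| < 1) (e : ℝ) :
    ContinuousOn (fun s : ℝ => (1 + t^2 + 2*t*s) ^ e) (Set.uIcc (-1:ℝ) 1) :=
  ContinuousOn.rpow_const (by fun_prop) (fun s hs => Or.inl (shell_pos ht hs).ne')

lemma shell_hasDeriv_lin (t p s : ℝ) (hA : 0 < 1 + t^2 + 2*t*s) :
    HasDerivAt (fun u => (1 + t^2 + 2*t*u) ^ p)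
      (2*t*p*(1 + t^2 + 2*t*s) ^ (p-1)) s := by
  have hl : HasDerivAt (fun u : ℝ => 1 + t^2 + 2*t*u) (2*t) s := by
    simpa using ((hasDerivAt_id s).const_mul (2*t)).const_add (1+t^2)
  exact hl.rpow_const (p := p) (Or.inl hA.ne')

lemma shell_hasDeriv_F (j : ℕ) (t p s : ℝ) (hA : 0 < 1 + t^2 + 2*t*s) :
    HasDerivAt (fun u => (1 - u^2)^(j+1) * (1 + t^2 + 2*t*u) ^ p)
      (-(2*((j:ℝ)+1))*s*(1-s^2)^j * (1 + t^2 + 2*t*s) ^ p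
        + 2*t*p*(1-s^2)^(j+1) * (1 + t^2 + 2*t*s) ^ (p-1)) s := by
  have h1 : HasDerivAt (fun u : ℝ => (1 - u^2)^(j+1)) (((j:ℝ)+1)*(1-s^2)^j*(-(2*s))) s := by
    have hb : HasDerivAt (fun u : ℝ => 1 - u^2) (-(2*s)) s := by
      simpa using (hasDerivAt_pow 2 s).const_sub 1
    simpa using hb.fun_pow (j+1)
  have := h1.fun_mul (shell_hasDeriv_lin t p s hA)
  refine this.congr_deriv ?_
  ring

lemma shell_hasDeriv_G (j : ℕ) (t p s : ℝ) (hA : 0 < 1 + t^2 + 2*t*s) :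
    HasDerivAt (fun u => u * ((1 - u^2)^(j+1) * (1 + t^2 + 2*t*u) ^ p))
      ((1-s^2)^(j+1) * (1 + t^2 + 2*t*s) ^ p
        + s * (-(2*((j:ℝ)+1))*s*(1-s^2)^j * (1 + t^2 + 2*t*s) ^ p
        + 2*t*p*(1-s^2)^(j+1) * (1 + t^2 + 2*t*s) ^ (p-1))) s := by
  have := (hasDerivAt_id s).mul (shell_hasDeriv_F j t p s hA)
  simp only [id_eq, one_mul] at this
  exact this

lemma shell_J (j : ℕ) : (∫ s in (-1:ℝ)..1, (1 - s^2)^j) = shellC (j+1) := by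
  induction j with
  | zero => norm_num [shellC_one]
  | succ j ih =>
    have hF : ∀ s ∈ Set.uIcc (-1:ℝ) 1, HasDerivAt (fun u : ℝ => u * (1-u^2)^(j+1))
        ((2*(j:ℝ)+3) * (1-s^2)^(j+1) - (2*(j:ℝ)+2) * (1-s^2)^j) s := by
      intro s _
      have hb : HasDerivAt (fun u : ℝ => 1 - u^2) (-(2*s)) s := by
        simpa using (hasDerivAt_pow 2 s).const_sub 1
      have h1 : HasDerivAt (fun u : ℝ => (1 - u^2)^(j+1)) (((j:ℝ)+1)*(1-s^2)^j*(-(2*s))) s := by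
        simpa using hb.fun_pow (j+1)
      have h2 := (hasDerivAt_id s).fun_mul h1
      simp only [id_eq, one_mul] at h2
      refine h2.congr_deriv ?_
      ring
    have hibp : (∫ s in (-1:ℝ)..1, ((2*(j:ℝ)+3) * (1-s^2)^(j+1) - (2*(j:ℝ)+2) * (1-s^2)^j)) = 0 := by
      rw [intervalIntegral.integral_eq_sub_of_hasDerivAt hF
        (by apply Continuous.intervalIntegrable; fun_prop)]
      norm_num
    have hsplit : (∫ s in (-1:ℝ)..1, ((2*(j:ℝ)+3) * (1-s^2)^(j+1) - (2*(j:ℝ)+2) * (1-s^2)^j))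
        = (2*(j:ℝ)+3) * (∫ s in (-1:ℝ)..1, (1-s^2)^(j+1))
          - (2*(j:ℝ)+2) * ∫ s in (-1:ℝ)..1, (1-s^2)^j := by
      rw [intervalIntegral.integral_sub, intervalIntegral.integral_const_mul,
        intervalIntegral.integral_const_mul]
      all_goals apply Continuous.intervalIntegrable; fun_prop
    rw [hsplit] at hibp
    have h23 : (2*(j:ℝ)+3) ≠ 0 := by positivity
    apply mul_left_cancel₀ h23
    have hrec := shellC_rec j
    rw [show j+2 = j+1+1 from rfl] at hrec
    linear_combination hibp + (2*(j:ℝ)+2) * ih - hrec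

lemma rel_R (j : ℕ) (t : ℝ) (ht : |t| < 1) :
    ((j:ℝ)+1) * shellI j ((1-2*(j:ℝ))/2) t
      - ((j:ℝ)+1)*(1+t^2) * shellI j (-(2*(j:ℝ)+1)/2) t
      + (2*(j:ℝ)+1) * t^2 * shellI (j+1) (-(2*(j:ℝ)+3)/2) t = 0 := by
  set e : ℝ := -(2*(j:ℝ)+1)/2 with he
  have he1 : (1-2*(j:ℝ))/2 = e + 1 := by rw [he]; ring
  have he3 : -(2*(j:ℝ)+3)/2 = e - 1 := by rw [he]; ring
  rw [he1, he3]
  have hint1 : IntervalIntegrable (fun s =>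
      -(2*((j:ℝ)+1))*s*(1-s^2)^j * (1 + t^2 + 2*t*s) ^ e) volume (-1:ℝ) 1 :=
    shell_intble ht e (p := fun s => -(2*((j:ℝ)+1))*s*(1-s^2)^j) (by fun_prop)
  have hint2 : IntervalIntegrable (fun s =>
      2*t*e*(1-s^2)^(j+1) * (1 + t^2 + 2*t*s) ^ (e-1)) volume (-1:ℝ) 1 :=
    shell_intble ht (e-1) (p := fun s => 2*t*e*(1-s^2)^(j+1)) (by fun_prop)
  have hibp : (∫ s in (-1:ℝ)..1,
      (-(2*((j:ℝ)+1))*s*(1-s^2)^j * (1 + t^2 + 2*t*s) ^ e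
        + 2*t*e*(1-s^2)^(j+1) * (1 + t^2 + 2*t*s) ^ (e-1))) = 0 := by
    rw [intervalIntegral.integral_eq_sub_of_hasDerivAt
      (fun s hs => shell_hasDeriv_F j t e s (shell_pos ht hs)) (hint1.add hint2)]
    norm_num
  have hkey : ∀ s ∈ Set.uIcc (-1:ℝ) 1,
      ((j:ℝ)+1) * ((1-s^2)^j * (1 + t^2 + 2*t*s) ^ (e+1))
        - ((j:ℝ)+1)*(1+t^2) * ((1-s^2)^j * (1 + t^2 + 2*t*s) ^ e)
        + (2*(j:ℝ)+1)*t^2 * ((1-s^2)^(j+1) * (1 + t^2 + 2*t*s) ^ (e-1))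
      = (-t) * (-(2*((j:ℝ)+1))*s*(1-s^2)^j * (1 + t^2 + 2*t*s) ^ e
        + 2*t*e*(1-s^2)^(j+1) * (1 + t^2 + 2*t*s) ^ (e-1)) := by
    intro s hs
    have hA := shell_pos ht hs
    have h1 : (1 + t^2 + 2*t*s) ^ (e+1) = (1 + t^2 + 2*t*s) ^ e * (1 + t^2 + 2*t*s) :=
      Real.rpow_add_one hA.ne' e
    have h2 : (1 + t^2 + 2*t*s) ^ e = (1 + t^2 + 2*t*s) ^ (e-1) * (1 + t^2 + 2*t*s) := by
      rw [← Real.rpow_add_one hA.ne' (e-1)]; ring_nf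
    rw [h1, h2, he]; ring
  have hsplit : (∫ s in (-1:ℝ)..1,
      (((j:ℝ)+1) * ((1-s^2)^j * (1 + t^2 + 2*t*s) ^ (e+1))
        - ((j:ℝ)+1)*(1+t^2) * ((1-s^2)^j * (1 + t^2 + 2*t*s) ^ e)
        + (2*(j:ℝ)+1)*t^2 * ((1-s^2)^(j+1) * (1 + t^2 + 2*t*s) ^ (e-1))))
      = ((j:ℝ)+1) * shellI j (e+1) t - ((j:ℝ)+1)*(1+t^2) * shellI j e t
        + (2*(j:ℝ)+1)*t^2 * shellI (j+1) (e-1) t := by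
    unfold shellI
    rw [intervalIntegral.integral_add, intervalIntegral.integral_sub,
      intervalIntegral.integral_const_mul, intervalIntegral.integral_const_mul,
      intervalIntegral.integral_const_mul]
    · exact (shell_intble ht (e+1) (p := fun s => (1-s^2)^j) (by fun_prop)).const_mul _
    · exact (shell_intble ht e (p := fun s => (1-s^2)^j) (by fun_prop)).const_mul _
    · exact ((shell_intble ht (e+1) (p := fun s => (1-s^2)^j) (by fun_prop)).const_mul _).sub
        ((shell_intble ht e (p := fun s => (1-s^2)^j) (by fun_prop)).const_mul _)
    · exact (shell_intble ht (e-1) (p := fun s => (1-s^2)^(j+1)) (by fun_prop)).const_mul _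
  rw [← hsplit, intervalIntegral.integral_congr hkey, intervalIntegral.integral_const_mul,
    hibp, mul_zero]

lemma rel_S (j : ℕ) (t : ℝ) (ht : |t| < 1) :
    ((2*(j:ℝ)+5)/2) * shellI (j+1) (-(2*(j:ℝ)+1)/2) t
      - (2*(j:ℝ)+2) * shellI j (-(2*(j:ℝ)+1)/2) t
      + ((2*(j:ℝ)+1)/2) * (1+t^2) * shellI (j+1) (-(2*(j:ℝ)+3)/2) t = 0 := by
  set e : ℝ := -(2*(j:ℝ)+1)/2 with he
  have he3 : -(2*(j:ℝ)+3)/2 = e - 1 := by rw [he]; ring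
  rw [he3]
  have hint : IntervalIntegrable (fun s =>
      (1-s^2)^(j+1) * (1 + t^2 + 2*t*s) ^ e
        + s * (-(2*((j:ℝ)+1))*s*(1-s^2)^j * (1 + t^2 + 2*t*s) ^ e
        + 2*t*e*(1-s^2)^(j+1) * (1 + t^2 + 2*t*s) ^ (e-1))) volume (-1:ℝ) 1 := by
    apply ContinuousOn.intervalIntegrable
    exact ((by fun_prop : Continuous fun s:ℝ => (1-s^2)^(j+1)).continuousOn.mul
        (shell_contOn ht e)).add
      ((continuous_id.continuousOn : ContinuousOn (fun s : ℝ => s) _).mul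
        ((((by fun_prop : Continuous fun s:ℝ => -(2*((j:ℝ)+1))*s*(1-s^2)^j).continuousOn).mul
            (shell_contOn ht e)).add
          (((by fun_prop : Continuous fun s:ℝ => 2*t*e*(1-s^2)^(j+1)).continuousOn).mul
            (shell_contOn ht (e-1)))))
  have hibp : (∫ s in (-1:ℝ)..1,
      ((1-s^2)^(j+1) * (1 + t^2 + 2*t*s) ^ e
        + s * (-(2*((j:ℝ)+1))*s*(1-s^2)^j * (1 + t^2 + 2*t*s) ^ e
        + 2*t*e*(1-s^2)^(j+1) * (1 + t^2 + 2*t*s) ^ (e-1)))) = 0 := by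
    rw [intervalIntegral.integral_eq_sub_of_hasDerivAt
      (fun s hs => shell_hasDeriv_G j t e s (shell_pos ht hs)) hint]
    norm_num
  have hkey : ∀ s ∈ Set.uIcc (-1:ℝ) 1,
      ((2*(j:ℝ)+5)/2) * ((1-s^2)^(j+1) * (1 + t^2 + 2*t*s) ^ e)
        - (2*(j:ℝ)+2) * ((1-s^2)^j * (1 + t^2 + 2*t*s) ^ e)
        + ((2*(j:ℝ)+1)/2) * (1+t^2) * ((1-s^2)^(j+1) * (1 + t^2 + 2*t*s) ^ (e-1))
      = (1-s^2)^(j+1) * (1 + t^2 + 2*t*s) ^ e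
        + s * (-(2*((j:ℝ)+1))*s*(1-s^2)^j * (1 + t^2 + 2*t*s) ^ e
        + 2*t*e*(1-s^2)^(j+1) * (1 + t^2 + 2*t*s) ^ (e-1)) := by
    intro s hs
    have hA := shell_pos ht hs
    have h2 : (1 + t^2 + 2*t*s) ^ e = (1 + t^2 + 2*t*s) ^ (e-1) * (1 + t^2 + 2*t*s) := by
      rw [← Real.rpow_add_one hA.ne' (e-1)]; ring_nf
    rw [h2, he]; ring
  have hsplit : (∫ s in (-1:ℝ)..1,
      (((2*(j:ℝ)+5)/2) * ((1-s^2)^(j+1) * (1 + t^2 + 2*t*s) ^ e)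
        - (2*(j:ℝ)+2) * ((1-s^2)^j * (1 + t^2 + 2*t*s) ^ e)
        + ((2*(j:ℝ)+1)/2) * (1+t^2) * ((1-s^2)^(j+1) * (1 + t^2 + 2*t*s) ^ (e-1))))
      = ((2*(j:ℝ)+5)/2) * shellI (j+1) e t - (2*(j:ℝ)+2) * shellI j e t
        + ((2*(j:ℝ)+1)/2) * (1+t^2) * shellI (j+1) (e-1) t := by
    unfold shellI
    rw [intervalIntegral.integral_add, intervalIntegral.integral_sub,
      intervalIntegral.integral_const_mul, intervalIntegral.integral_const_mul,
      intervalIntegral.integral_const_mul]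
    · exact (shell_intble ht e (p := fun s => (1-s^2)^(j+1)) (by fun_prop)).const_mul _
    · exact (shell_intble ht e (p := fun s => (1-s^2)^j) (by fun_prop)).const_mul _
    · exact ((shell_intble ht e (p := fun s => (1-s^2)^(j+1)) (by fun_prop)).const_mul _).sub
        ((shell_intble ht e (p := fun s => (1-s^2)^j) (by fun_prop)).const_mul _)
    · exact (shell_intble ht (e-1) (p := fun s => (1-s^2)^(j+1)) (by fun_prop)).const_mul _
  rw [← hsplit, intervalIntegral.integral_congr hkey, hibp]

lemma sq_rpow_half' {a : ℝ} (ha : 0 ≤ a) : ((a^2 : ℝ)) ^ ((1:ℝ)/2) = a := by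
  rw [← Real.sqrt_eq_rpow]; exact Real.sqrt_sq ha

lemma sq_rpow_three_half' {a : ℝ} (ha : 0 ≤ a) : ((a^2 : ℝ)) ^ ((3:ℝ)/2) = a^3 := by
  rw [← Real.rpow_natCast a 2, ← Real.rpow_mul ha]
  norm_num

lemma base_A {t : ℝ} (ht : |t| < 1) (ht0 : t ≠ 0) : shellI 0 (-(1:ℝ)/2) t = 2 := by
  obtain ⟨ht1, ht2⟩ := abs_lt.mp ht
  have h1 : (∫ s in (-1:ℝ)..1, 2*t*((1:ℝ)/2)*(1+t^2+2*t*s)^((1:ℝ)/2-1)) = 2*t := by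
    rw [intervalIntegral.integral_eq_sub_of_hasDerivAt
      (fun s hs => shell_hasDeriv_lin t (1/2) s (shell_pos ht hs))
      (shell_intble ht ((1:ℝ)/2-1) (p := fun _ => 2*t*((1:ℝ)/2)) (by fun_prop))]
    rw [show (1+t^2+2*t*1 : ℝ) = (1+t)^2 by ring, show (1+t^2+2*t*(-1) : ℝ) = (1-t)^2 by ring,
      sq_rpow_half' (by linarith), sq_rpow_half' (by linarith)]
    ring
  have h2 : (∫ s in (-1:ℝ)..1, 2*t*((1:ℝ)/2)*(1+t^2+2*t*s)^((1:ℝ)/2-1))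
      = t * shellI 0 (-(1:ℝ)/2) t := by
    unfold shellI
    rw [← intervalIntegral.integral_const_mul]
    apply intervalIntegral.integral_congr
    intro s hs
    norm_num
    exact Or.inl (by ring)
  rw [h2] at h1
  exact mul_left_cancel₀ ht0 (h1.trans (by ring : (2*t : ℝ) = t * 2))

lemma base_C {t : ℝ} (ht : |t| < 1) (ht0 : t ≠ 0) : shellI 0 ((1:ℝ)/2) t = 2 + 2*t^2/3 := by
  obtain ⟨ht1, ht2⟩ := abs_lt.mp ht
  have h1 : (∫ s in (-1:ℝ)..1, 2*t*((3:ℝ)/2)*(1+t^2+2*t*s)^((3:ℝ)/2-1)) = 6*t + 2*t^3 := by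
    rw [intervalIntegral.integral_eq_sub_of_hasDerivAt
      (fun s hs => shell_hasDeriv_lin t (3/2) s (shell_pos ht hs))
      (shell_intble ht ((3:ℝ)/2-1) (p := fun _ => 2*t*((3:ℝ)/2)) (by fun_prop))]
    rw [show (1+t^2+2*t*1 : ℝ) = (1+t)^2 by ring, show (1+t^2+2*t*(-1) : ℝ) = (1-t)^2 by ring,
      sq_rpow_three_half' (by linarith), sq_rpow_three_half' (by linarith)]
    ring
  have h2 : (∫ s in (-1:ℝ)..1, 2*t*((3:ℝ)/2)*(1+t^2+2*t*s)^((3:ℝ)/2-1))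
      = (3*t) * shellI 0 ((1:ℝ)/2) t := by
    unfold shellI
    rw [← intervalIntegral.integral_const_mul]
    apply intervalIntegral.integral_congr
    intro s hs
    norm_num
    exact Or.inl (by ring)
  rw [h2] at h1
  have h3 : (3*t : ℝ) ≠ 0 := by simp [ht0]
  exact mul_left_cancel₀ h3 (h1.trans (by ring))

lemma shell_main (t : ℝ) (ht : |t| < 1) : ∀ j : ℕ,
    shellI j (-(2*(j:ℝ)+1)/2) t = shellC (j+1) ∧
    (2*(j:ℝ)+3) * shellI j ((1-2*(j:ℝ))/2) t
      = (2*(j:ℝ)+3 + t^2*(1-2*(j:ℝ))) * shellC (j+1) := by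
  rcases eq_or_ne t 0 with rfl | ht0
  · intro j
    have hz : ∀ e : ℝ, shellI j e 0 = shellC (j+1) := by
      intro e
      unfold shellI
      rw [← shell_J j]
      apply intervalIntegral.integral_congr
      intro s hs
      norm_num
    refine ⟨hz _, ?_⟩
    rw [hz _]
    norm_num
  · intro j
    induction j with
    | zero =>
      constructor
      · rw [show (-(2*((0:ℕ):ℝ)+1)/2) = (-(1:ℝ)/2) by norm_num, base_A ht ht0]
        norm_num [shellC_one]
      · rw [show ((1-2*((0:ℕ):ℝ))/2) = ((1:ℝ)/2) by norm_num, base_C ht ht0]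
        norm_num [shellC_one]
        ring
    | succ j ih =>
      obtain ⟨ihA, ihC⟩ := ih
      have hR := rel_R j t ht
      have hS := rel_S j t ht
      have hrec := shellC_rec j
      rw [show j+2 = j+1+1 from rfl] at hrec
      have ht2 : t^2 ≠ 0 := pow_ne_zero 2 ht0
      have hAnew : shellI (j+1) (-(2*(j:ℝ)+3)/2) t = shellC (j+1+1) := by
        have hne : ((2*(j:ℝ)+1) * t^2 * (2*(j:ℝ)+3)) ≠ 0 :=
          mul_ne_zero (mul_ne_zero (by positivity) ht2) (by positivity)
        apply mul_left_cancel₀ hne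
        linear_combination (2*(j:ℝ)+3) * hR - ((j:ℝ)+1) * ihC
          + (2*(j:ℝ)+3)*((j:ℝ)+1)*(1+t^2) * ihA - (2*(j:ℝ)+1)*t^2 * hrec
      constructor
      · rw [show (-(2*((j+1:ℕ):ℝ)+1)/2) = (-(2*(j:ℝ)+3)/2) by push_cast; ring]
        exact hAnew
      · rw [show ((1-2*((j+1:ℕ):ℝ))/2) = (-(2*(j:ℝ)+1)/2) by push_cast; ring]
        push_cast
        linear_combination 2*hS + (4*(j:ℝ)+4) * ihA
          - (2*(j:ℝ)+1)*(1+t^2) * hAnew - 2*hrec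

end ShellAux

theorem stmt_0 (k : ℕ) (hk : 1 ≤ k) (R x : ℝ) (hR : 0 < R) (hx : 0 ≤ x) (hxR : x < R) :
    ∫ s in (-1:ℝ)..1, (1 - s^2)^(k-1) / (R^2 + x^2 + 2*R*x*s) ^ ((2*(k:ℝ) - 1)/2) =
      Real.sqrt π * Real.Gamma k / Real.Gamma (k + 1/2) / R ^ (2*k - 1) := by
  obtain ⟨j, rfl⟩ : ∃ j, k = j + 1 := ⟨k-1, (Nat.succ_pred_eq_of_pos hk).symm⟩
  have ht : |x / R| < 1 := by
    rw [abs_div, abs_of_pos hR, abs_of_nonneg hx]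
    exact (div_lt_one hR).mpr hxR
  have hA := (shell_main (x/R) ht j).1
  rw [show (j+1)-1 = j from rfl]
  rw [show (2*((j+1:ℕ):ℝ)-1)/2 = (2*(j:ℝ)+1)/2 by push_cast; ring]
  rw [show 2*(j+1)-1 = 2*j+1 by omega]
  have hpt : ∀ s ∈ Set.uIcc (-1:ℝ) 1,
      (1 - s^2)^j / (R^2 + x^2 + 2*R*x*s) ^ ((2*(j:ℝ)+1)/2)
        = (R^(2*j+1) : ℝ)⁻¹ * ((1 - s^2)^j * (1 + (x/R)^2 + 2*(x/R)*s) ^ (-(2*(j:ℝ)+1)/2)) := by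
    intro s hs
    have hApos := shell_pos ht hs
    have hB : R^2 + x^2 + 2*R*x*s = R^2 * (1 + (x/R)^2 + 2*(x/R)*s) := by
      field_simp
    have hRpow : ((R^2 : ℝ)) ^ ((2*(j:ℝ)+1)/2) = R ^ (2*j+1 : ℕ) := by
      rw [← Real.rpow_natCast R 2, ← Real.rpow_mul hR.le, ← Real.rpow_natCast R (2*j+1)]
      congr 1
      push_cast; ring
    rw [hB, show (-(2*(j:ℝ)+1)/2) = -((2*(j:ℝ)+1)/2) by ring,
      Real.rpow_neg hApos.le, Real.mul_rpow (by positivity) hApos.le, hRpow]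
    rw [div_eq_mul_inv, mul_inv]
    ring
  rw [intervalIntegral.integral_congr hpt, intervalIntegral.integral_const_mul]
  unfold shellI at hA
  rw [hA]
  show (R^(2*j+1):ℝ)⁻¹ * shellC (j+1) = shellC (j+1) / R ^ (2*j+1)
  exact inv_mul_eq_div _ _
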